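/- For m ≥ 3 and any integer k with 0 ≤ k ≤ 2^{m-2}, the quantity 2·C(2^m, 4k) + (2^{m+1}-2)·C(2^{m-1}, 2k) is divisible by 2^{m+1}. -/
import Mathlib

open Polynomial

lemma key_poly (t : ℕ) : ∃ q : Polynomial ℤ,
    (1 + X) ^ (2 ^ (t + 1)) = (1 + X ^ 2) ^ (2 ^ t) + C ((2:ℤ) ^ (t + 1)) * q := by
  induction t with
  | zero => exact ⟨X, by simp only [map_pow, map_ofNat]; ring⟩
  | succ t ih =>
    obtain ⟨q, hq⟩ := ih
    refine ⟨q * (1 + X ^ 2) ^ (2 ^ t) + C ((2:ℤ) ^ t) * q ^ 2, ?_⟩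
    have h1 : (2 : ℕ) ^ (t + 2) = 2 ^ (t + 1) * 2 := by ring
    have h2 : (2 : ℕ) ^ (t + 1) = 2 ^ t * 2 := by ring
    rw [h1, pow_mul, hq, h2, pow_mul]
    simp only [map_pow, map_mul, map_ofNat]
    ring

lemma choose_congr (m : ℕ) (hm : 1 ≤ m) (k : ℕ) :
    (2 : ℤ) ^ m ∣ ((2 ^ m).choose (4 * k) : ℤ) - ((2 ^ (m - 1)).choose (2 * k) : ℤ) := by
  obtain ⟨t, rfl⟩ : ∃ t, m = t + 1 := ⟨m - 1, (Nat.succ_pred_eq_of_pos hm).symm⟩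
  simp only [Nat.add_sub_cancel]
  obtain ⟨q, hq⟩ := key_poly t
  have hexp : (1 + X ^ 2 : Polynomial ℤ) ^ (2 ^ t)
      = Polynomial.expand ℤ 2 ((1 + X) ^ (2 ^ t)) := by
    rw [map_pow, map_add, map_one, Polynomial.expand_X]
  have hc := congrArg (fun p : Polynomial ℤ => p.coeff (4 * k)) hq
  simp only [hexp] at hc
  have c1 : ((1 + X : Polynomial ℤ) ^ (2 ^ (t + 1))).coeff (4 * k)
      = ((2 ^ (t + 1)).choose (4 * k) : ℤ) := by
    rw [add_comm, Polynomial.coeff_X_add_one_pow]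
  have c2 : (Polynomial.expand ℤ 2 ((1 + X : Polynomial ℤ) ^ (2 ^ t))).coeff (4 * k)
      = ((2 ^ t).choose (2 * k) : ℤ) := by
    rw [Polynomial.coeff_expand (by norm_num)]
    have h4 : (2 : ℕ) ∣ 4 * k := ⟨2 * k, by ring⟩
    rw [if_pos h4]
    have h42 : 4 * k / 2 = 2 * k := by omega
    rw [h42, add_comm, Polynomial.coeff_X_add_one_pow]
  rw [c1, Polynomial.coeff_add, c2, Polynomial.coeff_C_mul] at hc
  exact ⟨q.coeff (4 * k), by linarith [hc]⟩

/-- For m ≥ 3 and 0 ≤ k ≤ 2^(m-2), the quantity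
2·C(2^m, 4k) + (2^(m+1)-2)·C(2^(m-1), 2k) is divisible by 2^(m+1). -/
theorem rm_weight_formula_integrality (m : ℕ) (hm : 3 ≤ m) :
    ∀ k : ℕ, k ≤ 2 ^ (m - 2) →
      2 ^ (m + 1) ∣
        2 * (2 ^ m).choose (4 * k) + (2 ^ (m + 1) - 2) * (2 ^ (m - 1)).choose (2 * k) := by
  intro k _
  obtain ⟨c, hc⟩ := choose_congr m (by omega) k
  rw [← Int.natCast_dvd_natCast]
  have h2 : (2:ℕ) ≤ 2 ^ (m + 1) := by
    have : 2 ^ 1 ≤ 2 ^ (m + 1) := Nat.pow_le_pow_right (by norm_num) (by omega)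
    simpa using this
  push_cast [Nat.cast_sub h2]
  refine ⟨c + ((2 ^ (m - 1)).choose (2 * k) : ℤ), ?_⟩
  have hp : (2:ℤ) ^ (m + 1) = 2 ^ m * 2 := by ring
  rw [hp]
  linear_combination 2 * hc
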